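/- Let C be a Suslin scheme in a topological space Y all of whose sets C(s) are closed in Y, and let T be a well-founded tree on ω with leaf-rank r_l(T) = λ + n, where λ is a limit ordinal or 0 and n is finite. Then: (i) R_T(C) ∈ F_{λ+2n}(Y); (ii) if the root ∅ has only finitely many immediate successors in T, then R_T(C) ∈ F_{λ+2n−1}(Y). -/

import Mathlib

noncomputable section
open Classical Set Topology Filter Ordinal

universe u v

namespace FBorelPaper

/-! ### Ordinal parity -/

/-- The first uncountable ordinal. -/
def omega1 : Ordinal.{0} := Ordinal.omega 1

/-- An ordinal `a = λ + m` (with `λ` limit or zero, `m < ω`) is *even* iff `m` is even. -/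
def EvenOrd (a : Ordinal.{0}) : Prop := a % 2 = 0

/-- An ordinal `a = λ + m` (with `λ` limit or zero, `m < ω`) is *odd* iff `m` is odd. -/
def OddOrd (a : Ordinal.{0}) : Prop := a % 2 = 1

/-- For `a = λ + 2n + i` (with `λ` limit or zero, `n < ω`, `i ∈ {0,1}`),
`ordPrime a = λ + n` (the ordinal `α'` of the paper). -/
def ordPrime (a : Ordinal.{0}) : Ordinal.{0} :=
  Ordinal.omega0 * (a / Ordinal.omega0) + (a % Ordinal.omega0) / 2

/-! ### The F-Borel hierarchy -/

/-- The `F`-Borel hierarchy of a topological space: `FBorel Y 0` is the family of closed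
sets, and for `0 < a`, `FBorel Y a` consists of all countable unions (for odd `a`),
resp. countable intersections (for even `a`), of members of `⋃ b < a, FBorel Y b`. -/
def FBorel (Y : Type u) [TopologicalSpace Y] : Ordinal.{0} → Set (Set Y) :=
  WellFounded.fix Ordinal.lt_wf (C := fun _ => Set (Set Y)) fun a ih =>
    if a = 0 then { F | IsClosed F }
    else if EvenOrd a then
      { S | ∃ f : ℕ → Set Y, (∀ n, ∃ b, ∃ h : b < a, f n ∈ ih b h) ∧ S = ⋂ n, f n }
    else
      { S | ∃ f : ℕ → Set Y, (∀ n, ∃ b, ∃ h : b < a, f n ∈ ih b h) ∧ S = ⋃ n, f n }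

/-- The list `(σ 0, …, σ (k-1))` of the first `k` values of `σ : ℕ → ℕ`. -/
def seqPrefix (σ : ℕ → ℕ) (k : ℕ) : List ℕ := List.ofFn fun i : Fin k => σ i

/-- A Suslin scheme: a monotone family of sets indexed by finite sequences. -/
def IsSuslinScheme {Y : Type u} (C : List ℕ → Set Y) : Prop :=
  ∀ ⦃s t : List ℕ⦄, s <+: t → C t ⊆ C s

/-- The Suslin operation `A(C) = ⋃_{σ ∈ ω^ω} ⋂_k C(σ|k)`. -/
def suslinOp {Y : Type u} (C : List ℕ → Set Y) : Set Y :=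
  ⋃ σ : ℕ → ℕ, ⋂ k : ℕ, C (seqPrefix σ k)

/-- The Suslin-F subsets of `Y`: results of the Suslin operation applied to schemes of
closed sets. -/
def SuslinF (Y : Type u) [TopologicalSpace Y] : Set (Set Y) :=
  { S | ∃ C : List ℕ → Set Y, (∀ s, IsClosed (C s)) ∧ S = suslinOp C }

/-- The classes `F_a(Y)` for `a ≤ ω₁`, where `F_{ω₁}(Y)` is the class of Suslin-F sets. -/
def FClass (Y : Type u) [TopologicalSpace Y] (a : Ordinal.{0}) : Set (Set Y) :=
  if a < omega1 then FBorel Y a else SuslinF Y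

/-- `ComplIn Y X` is the complexity of `X` in `Y`: the least `a ≤ ω₁` with `X ∈ F_a(Y)`. -/
def ComplIn (Y : Type u) [TopologicalSpace Y] (X : Set Y) : Ordinal.{0} :=
  sInf { a : Ordinal.{0} | a ≤ omega1 ∧ X ∈ FClass Y a }

/-! ### Compactifications, K-analytic spaces, local complexity -/

/-- `(K, e)` is a compactification of `X`: `K` is compact Hausdorff and `e` is a dense
embedding of `X` into `K`. -/
def IsCompactification (X : Type u) [TopologicalSpace X] (K : Type u) [TopologicalSpace K]
    (e : X → K) : Prop :=
  CompactSpace K ∧ T2Space K ∧ IsEmbedding e ∧ DenseRange e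

/-- The set `Compl(X)` of all complexities attained by `X` in its compactifications. -/
def AttainedCompl (X : Type u) [TopologicalSpace X] : Set Ordinal.{0} :=
  { γ | ∃ (K : Type u) (_ : TopologicalSpace K) (e : X → K),
      IsCompactification X K e ∧ Set.range e ∈ SuslinF K ∧ γ = ComplIn K (Set.range e) }

/-- A topological space is K-analytic iff it embeds as a Suslin-F subset of some compact
Hausdorff space. -/
def IsKAnalytic (X : Type u) [TopologicalSpace X] : Prop :=
  ∃ (K : Type u) (_ : TopologicalSpace K) (e : X → K),
    CompactSpace K ∧ T2Space K ∧ IsEmbedding e ∧ Set.range e ∈ SuslinF K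

/-- The local complexity `Compl_y(X, Y)`: the least complexity of `cl(U) ∩ X` in `Y` over
all open neighborhoods `U` of `y` in `Y`. -/
def locComplAt (Y : Type u) [TopologicalSpace Y] (X : Set Y) (y : Y) : Ordinal.{0} :=
  sInf { γ : Ordinal.{0} | ∃ U : Set Y, IsOpen U ∧ y ∈ U ∧ γ = ComplIn Y (closure U ∩ X) }

/-- The local complexity `Compl_loc(X, Y) = sup_{x ∈ X} Compl_x(X, Y)`. -/
def locCompl (Y : Type u) [TopologicalSpace Y] (X : Set Y) : Ordinal.{0} :=
  ⨆ x : X, locComplAt Y X (x : Y)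

/-- The local complexity `Compl_locbar(X, Y) = sup_{y ∈ Y} Compl_y(X, Y)`. -/
def locComplBar (Y : Type u) [TopologicalSpace Y] (X : Set Y) : Ordinal.{0} :=
  ⨆ y : Y, locComplAt Y X y

/-! ### Trees on ω -/

/-- A tree on `ω`: a set of finite sequences closed under initial segments. -/
def IsTree (T : Set (List ℕ)) : Prop := ∀ ⦃s t : List ℕ⦄, s <+: t → t ∈ T → s ∈ T

/-- A tree is well-founded iff it carries no infinite branch. -/
def WellFoundedTree (T : Set (List ℕ)) : Prop := ¬ ∃ σ : ℕ → ℕ, ∀ k : ℕ, seqPrefix σ k ∈ T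

/-- `t` is a leaf of `T`: it belongs to `T` and has no immediate successor in `T`. -/
def IsLeafOf (T : Set (List ℕ)) (t : List ℕ) : Prop := t ∈ T ∧ ∀ n : ℕ, t ++ [n] ∉ T

/-- The tree `T^t = {s | t⌢s ∈ T}` corresponding to `t` in `T`. -/
def subtreeAt (T : Set (List ℕ)) (t : List ℕ) : Set (List ℕ) := { s | t ++ s ∈ T }

/-- The smallest tree containing a set `S` of finite sequences. -/
def clTr (S : Set (List ℕ)) : Set (List ℕ) := { u | ∃ s ∈ S, u <+: s }

/-- The leaf derivative: keep the elements having some proper extension in `T`. -/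
def leafDeriv (T : Set (List ℕ)) : Set (List ℕ) := { t ∈ T | ∃ s ∈ T, t <+: s ∧ t ≠ s }

/-- The derivative `D_iie`: keep the `t ∈ T` admitting infinitely many pairwise
incomparable extensions in `T` of pairwise different lengths. -/
def Diie (T : Set (List ℕ)) : Set (List ℕ) :=
  { t ∈ T | ∃ g : ℕ → List ℕ, (∀ n, g n ∈ T ∧ t <+: g n) ∧
      ∀ ⦃m n : ℕ⦄, m < n →
        (¬ g m <+: g n) ∧ (¬ g n <+: g m) ∧ (g m).length ≠ (g n).length }

/-- Transfinitely iterated derivative, starting from `cl_Tr S` and taking intersections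
at limit stages. -/
def iterDeriv (D : Set (List ℕ) → Set (List ℕ)) (S : Set (List ℕ)) (γ : Ordinal.{0}) :
    Set (List ℕ) :=
  Ordinal.limitRecOn γ (clTr S) (fun _ ih => D ih)
    (fun a _ ih => ⋂ b : Ordinal.{0}, ⋂ h : b < a, ih b h)

/-- The rank associated with the leaf derivative: the least `γ` such that the `(γ+1)`-st
iterated leaf derivative is empty, and `ω₁` if there is no such countable ordinal. -/
def leafRank (T : Set (List ℕ)) : Ordinal.{0} :=
  if ∃ γ : Ordinal.{0}, γ < omega1 ∧ iterDeriv leafDeriv T (γ + 1) = ∅ then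
    sInf { γ : Ordinal.{0} | iterDeriv leafDeriv T (γ + 1) = ∅ }
  else omega1

/-- `E` is the canonical extension of the `l(T)`-scheme `H` to the whole of `T`:
it agrees with `H` on the leaves of `T`, and at a non-leaf `t ∈ T` it is the union
(resp. the intersection) of its values at the immediate successors of `t` in `T` when
the leaf-rank of `T^t` is odd (resp. even). -/
def IsSchemeExtension (Y : Type u) [TopologicalSpace Y] (T : Set (List ℕ))
    (H E : List ℕ → Set Y) : Prop :=
  (∀ t, IsLeafOf T t → E t = H t) ∧
  (∀ t ∈ T, ¬ IsLeafOf T t → OddOrd (leafRank (subtreeAt T t)) →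
      E t = ⋃ n ∈ { n : ℕ | t ++ [n] ∈ T }, E (t ++ [n])) ∧
  (∀ t ∈ T, ¬ IsLeafOf T t → EvenOrd (leafRank (subtreeAt T t)) →
      E t = ⋂ n ∈ { n : ℕ | t ++ [n] ∈ T }, E (t ++ [n]))

/-- `H` (an `l(T)`-scheme of subsets of `X`) is a *universal simple `F_α`-representation*
of `X`: `r_l(T) ≤ α`, and for every space `Y` containing (a copy of) `X`, the extension
of the scheme of closures `(cl_Y (H t))_t` computes `X` at the root. -/
def HasUniversalSimpleRep (X : Type u) [TopologicalSpace X] (α : Ordinal.{0}) : Prop :=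
  ∃ (T : Set (List ℕ)) (H : List ℕ → Set X), IsTree T ∧ WellFoundedTree T ∧ [] ∈ T ∧
    leafRank T ≤ α ∧
    ∀ (Y : Type u) (_ : TopologicalSpace Y) (e : X → Y), IsEmbedding e →
      ∃ E : List ℕ → Set Y,
        IsSchemeExtension Y T (fun t => closure (e '' H t)) E ∧ E [] = Set.range e

/-! ### Canonical trees -/

/-- Auxiliary indices for the canonical trees: at a successor `a = b + 1` every index is
`b`, and at a countable limit the indices enumerate all ordinals `< a` injectively. -/
def canonIdx (a : Ordinal.{0}) (n : ℕ) : Ordinal.{0} :=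
  if hs : ∃ b, a = b + 1 then hs.choose
  else if hf : ∃ f : ℕ → Ordinal.{0}, Function.Injective f ∧ Set.range f = Set.Iio a then
    hf.choose n
  else 0

theorem canonIdx_lt {a : Ordinal.{0}} (h0 : a ≠ 0) (n : ℕ) : canonIdx a n < a := by
  unfold canonIdx
  split
  · next hs =>
      conv_rhs => rw [hs.choose_spec]
      rw [Ordinal.add_one_eq_succ]
      exact Order.lt_succ _
  · split
    · next hf =>
        have hmem : hf.choose n ∈ Set.range hf.choose := Set.mem_range_self n
        rw [hf.choose_spec.2] at hmem
        exact hmem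
    · exact pos_iff_ne_zero.mpr h0

/-- The canonical "maximal" trees `T_α` of leaf-rank `α < ω₁` (with `T_α = ω^{<ω}` for
`α ≥ ω₁`): `T_0 = {∅}`, `T_{α+1} = {∅} ∪ ⋃_n n⌢T_α`, and at countable limits
`T_α = {∅} ∪ ⋃_n n⌢T_{π_α(n)}` for an injective enumeration `π_α` of `α`. -/
def canonTree : Ordinal.{0} → Set (List ℕ) :=
  WellFounded.fix Ordinal.lt_wf (C := fun _ => Set (List ℕ)) fun a ih =>
    if h0 : a = 0 then {([] : List ℕ)}
    else if omega1 ≤ a then Set.univ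
    else {([] : List ℕ)} ∪ ⋃ n : ℕ, (List.cons n) '' ih (canonIdx a n) (canonIdx_lt h0 n)

/-- The canonical trees `T^c_α`: `T_{α'}` for even `α`, and `{∅} ∪ 1⌢T_{α'}` for odd `α`. -/
def canonTreeC (a : Ordinal.{0}) : Set (List ℕ) :=
  if EvenOrd a then canonTree (ordPrime a)
  else {([] : List ℕ)} ∪ (List.cons 1) '' canonTree (ordPrime a)

/-- The canonical trees `T^c_{α,i} = {∅} ∪ i⌢T_{α'}` (for odd `α`). -/
def canonTreeCi (a : Ordinal.{0}) (i : ℕ) : Set (List ℕ) :=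
  {([] : List ℕ)} ∪ (List.cons i) '' canonTree (ordPrime a)

/-! ### Admissible maps, `R_T` and regular representations -/

/-- An admissible map on a tree `T`: monotone w.r.t. extension, with
`|φ(t)| = t(0) + ⋯ + t(|t|-1)` for all `t ∈ T`. -/
def Admissible (T : Set (List ℕ)) (φ : List ℕ → List ℕ) : Prop :=
  (∀ ⦃s t : List ℕ⦄, s ∈ T → t ∈ T → s <+: t → φ s <+: φ t) ∧
  (∀ t ∈ T, (φ t).length = t.sum)

/-- `R_T(C)`: the points of `C(∅)` admitting an admissible witness map along `T`. -/
def RT {Y : Type u} (T : Set (List ℕ)) (C : List ℕ → Set Y) : Set Y :=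
  { x | x ∈ C [] ∧ ∃ φ : List ℕ → List ℕ, Admissible T φ ∧ ∀ t ∈ T, x ∈ C (φ t) }

/-- `R_α(C) = R_{T^c_α}(C)`. -/
def Ralpha {Y : Type u} (a : Ordinal.{0}) (C : List ℕ → Set Y) : Set Y :=
  RT (canonTreeC a) C

/-- A Suslin scheme `C` of subsets of `X ⊆ Y` is *complete on `X`*: it is a Suslin scheme
on `X` (it consists of subsets of `X` and the Suslin operation applied to it covers `X`)
such that every nontrivial filter containing, for each `n`, a set `C s` with `|s| = n`,
has an accumulation point in `X`. -/
def IsCompleteOn (Y : Type u) [TopologicalSpace Y] (X : Set Y) (C : List ℕ → Set Y) :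
    Prop :=
  IsSuslinScheme C ∧ (∀ s, C s ⊆ X) ∧ X ⊆ suslinOp C ∧
  ∀ F : Filter Y, F.NeBot → (∀ n : ℕ, ∃ s : List ℕ, s.length = n ∧ C s ∈ F) →
    ∃ x ∈ X, ClusterPt x F

/-- The tree `S_C(y)` of finite sequences `s` with `y ∈ cl_Y (C s)`. -/
def SCtree (Y : Type u) [TopologicalSpace Y] (C : List ℕ → Set Y) (y : Y) :
    Set (List ℕ) :=
  { s : List ℕ | y ∈ closure (C s) }

/-! ### Zoom spaces -/

/-- The set of isolated points of a topological space. -/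
def IsolPts (Y : Type u) [TopologicalSpace Y] : Set Y := { y | IsOpen ({y} : Set Y) }

/-- The underlying set of the zoom space `Z(Y, X)`: the non-isolated points of `Y`
together with the disjoint union of the spaces `X i`, `i ∈ I_Y`. -/
def ZoomCarrier (Y : Type u) [TopologicalSpace Y] (X : IsolPts Y → Type v) :
    Type (max u v) :=
  ({ y : Y // y ∉ IsolPts Y }) ⊕ ((i : IsolPts Y) × X i)

/-- The basic set `V_U ⊆ Z(Y, X)` associated with `U ⊆ Y`:
`V_U = (U ∖ I_Y) ∪ ⋃ {X i | i ∈ U ∩ I_Y}`. -/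
def zoomVSet (Y : Type u) [TopologicalSpace Y] (X : IsolPts Y → Type v) (U : Set Y) :
    Set (ZoomCarrier Y X) :=
  { z | Sum.elim (fun y : { y : Y // y ∉ IsolPts Y } => (y : Y) ∈ U)
      (fun p : (i : IsolPts Y) × X i => (p.1 : Y) ∈ U) z }

/-- The topology of the zoom space `Z(Y, X)`, generated by the open subsets of the
spaces `X i` together with the sets `V_U` for `U` open in `Y`. -/
instance zoomTopology (Y : Type u) [TopologicalSpace Y] (X : IsolPts Y → Type v)
    [∀ i, TopologicalSpace (X i)] : TopologicalSpace (ZoomCarrier Y X) :=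
  TopologicalSpace.generateFrom
    ({ B | ∃ (i : IsolPts Y) (W : Set (X i)), IsOpen W ∧
        B = Sum.inr '' ((Sigma.mk i) '' W) } ∪
     { B | ∃ U : Set Y, IsOpen U ∧ B = zoomVSet Y X U })

/-- The subset of `Z(Y, X)` which is the underlying set of the zoom space `Z(Ys, A)` of
a subspace `Ys ⊆ Y` with respect to subspaces `A i ⊆ X i`
(here the isolated points of `Ys` are identified with those of `Y`). -/
def zoomSub (Y : Type u) [TopologicalSpace Y] (X : IsolPts Y → Type v) (Ys : Set Y)
    (A : ∀ i : IsolPts Y, Set (X i)) : Set (ZoomCarrier Y X) :=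
  { z | Sum.elim (fun y : { y : Y // y ∉ IsolPts Y } => (y : Y) ∈ Ys)
      (fun p : (i : IsolPts Y) × X i => p.2 ∈ A p.1) z }

/-! ### Broom sets and broom spaces -/

/-- A forking sequence: a sequence of nonempty finite sequences with pairwise distinct
first entries. -/
def IsForking (f : ℕ → List ℕ) : Prop :=
  (∀ n, f n ≠ []) ∧ ∀ ⦃m n : ℕ⦄, m ≠ n → (f m).head? ≠ (f n).head?

/-- The hierarchy of finite broom sets: `B ∈ B_α` iff `IsBroomB α B`.
`B_0 = {{∅}}`; for odd `α`, `B_α = B_{<α} ∪ {h⌢B | B ∈ B_{α-1}, h ∈ ω^{<ω}}`; for even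
`α > 0`, `B_α = B_{<α} ∪ {⋃_n f_n⌢B_n | B_n ∈ B_{<α}, (f_n) a forking sequence}`. -/
inductive IsBroomB : Ordinal.{0} → Set (List ℕ) → Prop
  | base : IsBroomB 0 {[]}
  | mono {β α : Ordinal.{0}} {B : Set (List ℕ)} : β < α → IsBroomB β B → IsBroomB α B
  | odd {β : Ordinal.{0}} {B : Set (List ℕ)} (h : List ℕ) : EvenOrd β → IsBroomB β B →
      IsBroomB (β + 1) ((fun s => h ++ s) '' B)
  | even {α : Ordinal.{0}} {f : ℕ → List ℕ} {Bs : ℕ → Set (List ℕ)}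
      (g : ℕ → Ordinal.{0}) :
      0 < α → EvenOrd α → IsForking f →
      (∀ n : ℕ, g n < α) → (∀ n : ℕ, IsBroomB (g n) (Bs n)) →
      IsBroomB α (⋃ n : ℕ, (fun s => f n ++ s) '' Bs n)

/-- The infinite sequence `s⌢ν` obtained by extending the finite sequence `s` by `ν`. -/
def seqAppend (s : List ℕ) (ν : ℕ → ℕ) : ℕ → ℕ :=
  fun k => if h : k < s.length then s.get ⟨k, h⟩ else ν (k - s.length)

/-- `A` is a broom-extension of `B`:
`A = {s⌢f^s_n⌢ν^s_n | s ∈ B, n ∈ ω}` for forking sequences `(f^s_n)_n, s ∈ B`, and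
points `ν^s_n ∈ ω^ω`. -/
def IsBroomExtension (B : Set (List ℕ)) (A : Set (ℕ → ℕ)) : Prop :=
  ∃ (f : List ℕ → ℕ → List ℕ) (ν : List ℕ → ℕ → (ℕ → ℕ)),
    (∀ s ∈ B, IsForking (f s)) ∧
    A = { σ : ℕ → ℕ | ∃ s ∈ B, ∃ n : ℕ, σ = seqAppend (s ++ f s n) (ν s n) }

/-- The hierarchy of infinite broom sets: `A ∈ A_α` iff `A` is a broom-extension of some
`B ∈ B_α`. -/
def IsBroomA (α : Ordinal.{0}) (A : Set (ℕ → ℕ)) : Prop :=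
  ∃ B : Set (List ℕ), IsBroomB α B ∧ IsBroomExtension B A

/-- `u` is a finite initial segment of the infinite sequence `σ`. -/
def InfExtends (u : List ℕ) (σ : ℕ → ℕ) : Prop := seqPrefix σ u.length = u

/-- The tree of all finite initial segments of members of a set of infinite sequences. -/
def clTrInf (S : Set (ℕ → ℕ)) : Set (List ℕ) := { u | ∃ σ ∈ S, InfExtends u σ }

/-- The broom space `T_𝒜` on `ω^ω ∪ {∞}` (with `∞ = none`): every point of `ω^ω` is
isolated, and the neighborhood subbasis at `∞` consists of the complements of single
points of `ω^ω` and of the complements of the sets `A ∈ 𝒜`. -/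
def broomTop (𝒜 : Set (Set (ℕ → ℕ))) : TopologicalSpace (Option (ℕ → ℕ)) :=
  TopologicalSpace.generateFrom
    ({ S | ∃ σ : ℕ → ℕ, S = {Option.some σ} } ∪
     { S | ∃ σ : ℕ → ℕ, S = insert Option.none (Option.some '' ({σ}ᶜ)) } ∪
     { S | ∃ A ∈ 𝒜, S = insert Option.none (Option.some '' Aᶜ) })


section Lemmas
variable {Y : Type u} [TopologicalSpace Y]

theorem FBorel_eq (a : Ordinal.{0}) :
    FBorel Y a =
      if a = 0 then { F | IsClosed F }
      else if EvenOrd a then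
        { S | ∃ f : ℕ → Set Y, (∀ n, ∃ b, ∃ _ : b < a, f n ∈ FBorel Y b) ∧ S = ⋂ n, f n }
      else
        { S | ∃ f : ℕ → Set Y, (∀ n, ∃ b, ∃ _ : b < a, f n ∈ FBorel Y b) ∧ S = ⋃ n, f n } := by
  conv_lhs => rw [FBorel, WellFounded.fix_eq]
  rfl

theorem FBorel_zero : FBorel Y 0 = { F | IsClosed F } := by
  rw [FBorel_eq]; simp

theorem isClosed_mem_FBorel {F : Set Y} (h : IsClosed F) (a : Ordinal.{0}) :
    F ∈ FBorel Y a := by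
  induction a using Ordinal.induction with
  | h a ih =>
    rcases eq_or_ne a 0 with rfl | ha
    · rw [FBorel_zero]; exact h
    · rw [FBorel_eq]
      rw [if_neg ha]
      have h0 : (0 : Ordinal.{0}) < a := pos_iff_ne_zero.mpr ha
      by_cases he : EvenOrd a
      · rw [if_pos he]
        exact ⟨fun _ => F, fun n => ⟨0, h0, ih 0 h0⟩, (Set.iInter_const F).symm⟩
      · rw [if_neg he]
        exact ⟨fun _ => F, fun n => ⟨0, h0, ih 0 h0⟩, (Set.iUnion_const F).symm⟩

theorem FBorel_mono {b a : Ordinal.{0}} (h : b ≤ a) : FBorel Y b ⊆ FBorel Y a := by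
  rcases eq_or_lt_of_le h with rfl | h
  · exact subset_rfl
  · intro S hS
    have ha : a ≠ 0 := pos_iff_ne_zero.mp (lt_of_le_of_lt (zero_le : (0 : Ordinal.{0}) ≤ b) h)
    rw [FBorel_eq, if_neg ha]
    by_cases he : EvenOrd a
    · rw [if_pos he]
      exact ⟨fun _ => S, fun n => ⟨b, h, hS⟩, (Set.iInter_const S).symm⟩
    · rw [if_neg he]
      exact ⟨fun _ => S, fun n => ⟨b, h, hS⟩, (Set.iUnion_const S).symm⟩

end Lemmas
section Lemmas2
variable {Y : Type u} [TopologicalSpace Y]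

theorem OddOrd.not_even {a : Ordinal.{0}} (h : OddOrd a) : ¬ EvenOrd a := by
  intro he; rw [OddOrd, he] at h; exact one_ne_zero h.symm

theorem OddOrd.ne_zero {a : Ordinal.{0}} (h : OddOrd a) : a ≠ 0 := by
  intro h0; rw [h0, OddOrd, Ordinal.zero_mod] at h; exact one_ne_zero h.symm

theorem mem_FBorel_iUnion {a : Ordinal.{0}} (ho : OddOrd a) {ι : Type} [Countable ι]
    (f : ι → Set Y) (h : ∀ i, ∃ b, b < a ∧ f i ∈ FBorel Y b) :
    (⋃ i, f i) ∈ FBorel Y a := by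
  have ha : a ≠ 0 := ho.ne_zero
  have h0 : (0 : Ordinal.{0}) < a := pos_iff_ne_zero.mpr ha
  rw [FBorel_eq, if_neg ha, if_neg ho.not_even]
  cases isEmpty_or_nonempty ι with
  | inl hι =>
    refine ⟨fun _ => (∅ : Set Y), fun n => ⟨0, h0, isClosed_mem_FBorel isClosed_empty 0⟩, ?_⟩
    simp
  | inr hι =>
    obtain ⟨g, hg⟩ := exists_surjective_nat ι
    exact ⟨fun n => f (g n), fun n => let ⟨b, hb, m⟩ := h (g n); ⟨b, hb, m⟩,
      (hg.iUnion_comp f).symm⟩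

theorem mem_FBorel_iInter {a : Ordinal.{0}} (he : EvenOrd a) {ι : Type} [Countable ι]
    (f : ι → Set Y) (h : ∀ i, ∃ b, b ≤ a ∧ f i ∈ FBorel Y b) :
    (⋂ i, f i) ∈ FBorel Y a := by
  rcases eq_or_ne a 0 with rfl | ha
  · rw [FBorel_zero]
    refine Set.mem_setOf.mpr (isClosed_iInter fun i => ?_)
    obtain ⟨b, hb, hfb⟩ := h i
    have : b = 0 := nonpos_iff_eq_zero.mp hb
    subst this; rw [FBorel_zero] at hfb; exact hfb
  · have h0 : (0 : Ordinal.{0}) < a := pos_iff_ne_zero.mpr ha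
    have key : ∀ i, ∃ g : ℕ → Set Y,
        (∀ n, ∃ b, b < a ∧ g n ∈ FBorel Y b) ∧ f i = ⋂ n, g n := by
      intro i; obtain ⟨b, hb, hfb⟩ := h i
      rcases eq_or_lt_of_le hb with rfl | hlt
      · rw [FBorel_eq, if_neg ha, if_pos he] at hfb
        obtain ⟨g, hgl, hfg⟩ := hfb
        exact ⟨g, fun n => let ⟨b', hb', m⟩ := hgl n; ⟨b', hb', m⟩, hfg⟩
      · exact ⟨fun _ => f i, fun _ => ⟨b, hlt, hfb⟩, (Set.iInter_const _).symm⟩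
    choose g hgl hfg using key
    rw [FBorel_eq, if_neg ha, if_pos he]
    cases isEmpty_or_nonempty ι with
    | inl hι =>
      refine ⟨fun _ => (Set.univ : Set Y), fun n =>
        ⟨0, h0, isClosed_mem_FBorel isClosed_univ 0⟩, ?_⟩
      simp
    | inr hι =>
      obtain ⟨e, hge⟩ := exists_surjective_nat (ι × ℕ)
      refine ⟨fun n => g (e n).1 (e n).2, fun n => let ⟨b, hb, m⟩ := hgl (e n).1 (e n).2; ⟨b, hb, m⟩, ?_⟩
      have h2 : ⋂ i, f i = ⋂ p : ι × ℕ, g p.1 p.2 := by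
        ext x
        simp only [Set.mem_iInter, hfg]
        exact ⟨fun hx p => hx p.1 p.2, fun hx i n => hx (i, n)⟩
      rw [h2]
      exact (hge.iInter_comp _).symm

end Lemmas2
section Lemmas3

theorem mod_two_eq_zero_of_limit {lam : Ordinal.{0}} (h : Order.IsSuccLimit lam ∨ lam = 0) :
    lam % 2 = 0 := by
  rcases h with h | rfl
  · have h2 : (2 : Ordinal.{0}) ∣ Ordinal.omega0 := by
      have : (2 : Ordinal.{0}) * Ordinal.omega0 = Ordinal.omega0 :=
        Ordinal.mul_omega0 (by norm_num) (Ordinal.nat_lt_omega0 2)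
      exact ⟨Ordinal.omega0, this.symm⟩
    have := (Ordinal.isSuccLimit_iff_omega0_dvd.mp h).2
    exact Ordinal.dvd_iff_mod_eq_zero.mp (dvd_trans h2 this)
  · simp

theorem add_nat_mod_two {lam : Ordinal.{0}} (h : Order.IsSuccLimit lam ∨ lam = 0) (m : ℕ) :
    (lam + (m : Ordinal.{0})) % 2 = ((m % 2 : ℕ) : Ordinal.{0}) := by
  have h0 : lam % 2 = 0 := mod_two_eq_zero_of_limit h
  have hd : (2 : Ordinal.{0}) ∣ lam := Ordinal.dvd_iff_mod_eq_zero.mpr h0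
  obtain ⟨c, rfl⟩ := hd
  rw [Ordinal.mul_add_mod_self, Ordinal.natCast_mod]
  norm_cast

theorem evenOrd_add_nat {lam : Ordinal.{0}} (h : Order.IsSuccLimit lam ∨ lam = 0) (n : ℕ) :
    EvenOrd (lam + ((2 * n : ℕ) : Ordinal.{0})) := by
  rw [EvenOrd, add_nat_mod_two h, Nat.mul_mod_right]
  norm_num

theorem oddOrd_add_nat {lam : Ordinal.{0}} (h : Order.IsSuccLimit lam ∨ lam = 0) (n : ℕ) :
    OddOrd (lam + ((2 * n + 1 : ℕ) : Ordinal.{0})) := by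
  rw [OddOrd, add_nat_mod_two h]
  norm_num [Nat.add_mod, Nat.mul_mod_right]

theorem add_nat_lt_limit {lam' lam : Ordinal.{0}} (h' : Order.IsSuccLimit lam' ∨ lam' = 0)
    (hl : Order.IsSuccLimit lam) (h : lam' < lam) (m : ℕ) : lam' + (m : Ordinal.{0}) < lam := by
  by_contra hc
  push_neg at hc
  have hle : lam' ≤ lam := h.le
  have heq : lam' + (lam - lam') = lam := Ordinal.add_sub_cancel_of_le hle
  have hcm : lam - lam' ≤ (m : Ordinal.{0}) := by
    rw [← add_le_add_iff_left lam', heq]; exact hc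
  obtain ⟨j, hj⟩ := Ordinal.lt_omega0.mp (lt_of_le_of_lt hcm (Ordinal.nat_lt_omega0 m))
  have hj0 : j ≠ 0 := by
    rintro rfl
    rw [hj] at heq; simp at heq; exact h.ne heq
  obtain ⟨i, rfl⟩ := Nat.exists_eq_succ_of_ne_zero hj0
  have : lam = Order.succ (lam' + (i : Ordinal.{0})) := by
    rw [← Ordinal.add_one_eq_succ, ← heq, hj]
    push_cast
    rw [add_assoc]
  have hlt : lam' + (i : Ordinal.{0}) < lam := by
    rw [this]; exact Order.lt_succ _
  exact absurd (hl.succ_lt hlt) (by rw [← this]; exact lt_irrefl lam)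

theorem exists_decomp (r : Ordinal.{0}) :
    ∃ (lam : Ordinal.{0}) (m : ℕ), (Order.IsSuccLimit lam ∨ lam = 0) ∧ r = lam + (m : Ordinal.{0}) := by
  obtain ⟨m, hm⟩ := Ordinal.lt_omega0.mp (Ordinal.mod_lt r Ordinal.omega0_ne_zero)
  refine ⟨Ordinal.omega0 * (r / Ordinal.omega0), m, ?_, by rw [← hm, Ordinal.div_add_mod]⟩
  rcases eq_or_ne (r / Ordinal.omega0) 0 with h0 | h0
  · right; rw [h0, mul_zero]
  · left
    rw [Ordinal.isSuccLimit_iff_omega0_dvd]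
    exact ⟨mul_ne_zero Ordinal.omega0_ne_zero h0, dvd_mul_right _ _⟩

theorem comp_le {lam' lam : Ordinal.{0}} {n' n : ℕ}
    (h' : Order.IsSuccLimit lam' ∨ lam' = 0) (h : Order.IsSuccLimit lam ∨ lam = 0) (hn : 1 ≤ n)
    (hlt : lam' + (n' : Ordinal.{0}) < lam + (n : Ordinal.{0})) :
    lam' + ((2 * n' : ℕ) : Ordinal.{0}) ≤ lam + ((2 * (n - 1) : ℕ) : Ordinal.{0}) := by
  rcases lt_trichotomy lam' lam with hll | rfl | hll
  · have hlim : Order.IsSuccLimit lam := by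
      rcases h with h | rfl
      · exact h
      · exact absurd hll (by simp)
    exact le_trans (add_nat_lt_limit h' hlim hll (2 * n')).le le_self_add
  · have : (n' : Ordinal.{0}) < (n : Ordinal.{0}) := by
      rwa [add_lt_add_iff_left] at hlt
    have hnn : n' < n := by exact_mod_cast this
    apply add_le_add_right
    exact_mod_cast Nat.mul_le_mul_left 2 (by omega : n' ≤ n - 1)
  · have hlim : Order.IsSuccLimit lam' := by
      rcases h' with h' | rfl
      · exact h'
      · exact absurd hll (by simp)
    have h1 : lam + (n : Ordinal.{0}) < lam' := add_nat_lt_limit h hlim hll n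
    exact absurd (h1.trans ((le_self_add : lam' ≤ lam' + (n' : Ordinal.{0})) |>.trans_lt hlt)) (lt_irrefl _)

end Lemmas3
section Lemmas4

theorem isTree_clTr (S : Set (List ℕ)) : IsTree (clTr S) := by
  rintro s t hst ⟨v, hv, htv⟩
  exact ⟨v, hv, hst.trans htv⟩

theorem IsTree.clTr_eq {T : Set (List ℕ)} (hT : IsTree T) : clTr T = T := by
  ext u
  exact ⟨fun ⟨s, hs, hus⟩ => hT hus hs, fun hu => ⟨u, hu, List.prefix_refl u⟩⟩

theorem IsTree.nil_mem {T : Set (List ℕ)} (hT : IsTree T) {t : List ℕ} (ht : t ∈ T) :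
    [] ∈ T := hT (List.nil_prefix) ht

theorem leafDeriv_subset (T : Set (List ℕ)) : leafDeriv T ⊆ T := fun _ ht => ht.1

theorem IsTree.leafDeriv {T : Set (List ℕ)} (hT : IsTree T) : IsTree (leafDeriv T) := by
  rintro s t hst ⟨htT, v, hv, htv, hne⟩
  by_cases hst' : s = t
  · subst hst'; exact ⟨htT, v, hv, htv, hne⟩
  · exact ⟨hT hst htT, t, htT, hst, hst'⟩

theorem iterDeriv_zero (D : Set (List ℕ) → Set (List ℕ)) (S : Set (List ℕ)) :
    iterDeriv D S 0 = clTr S := Ordinal.limitRecOn_zero _ _ _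

theorem iterDeriv_succ (D : Set (List ℕ) → Set (List ℕ)) (S : Set (List ℕ))
    (γ : Ordinal.{0}) : iterDeriv D S (γ + 1) = D (iterDeriv D S γ) := by
  rw [iterDeriv, Ordinal.add_one_eq_succ, Ordinal.limitRecOn_succ]
  rfl

theorem iterDeriv_limit (D : Set (List ℕ) → Set (List ℕ)) (S : Set (List ℕ))
    {γ : Ordinal.{0}} (h : Order.IsSuccLimit γ) :
    iterDeriv D S γ = ⋂ b : Ordinal.{0}, ⋂ _ : b < γ, iterDeriv D S b := by
  rw [iterDeriv, Ordinal.limitRecOn_limit _ _ _ _ h]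
  rfl

theorem iterDeriv_anti (D : Set (List ℕ) → Set (List ℕ)) (hD : ∀ S, D S ⊆ S)
    (S : Set (List ℕ)) : ∀ γ : Ordinal.{0}, ∀ β ≤ γ, iterDeriv D S γ ⊆ iterDeriv D S β := by
  intro γ
  induction γ using Ordinal.induction with
  | h γ ih =>
    intro β hβ
    rcases eq_or_lt_of_le hβ with rfl | hlt
    · exact subset_rfl
    rcases Ordinal.zero_or_succ_or_isSuccLimit γ with rfl | ⟨δ, rfl⟩ | hl
    · exact absurd hlt (by simp)
    · rw [← Ordinal.add_one_eq_succ, iterDeriv_succ]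
      have hβδ : β ≤ δ := Order.lt_succ_iff.mp hlt
      exact (hD _).trans (ih δ (by rw [← Ordinal.add_one_eq_succ]; exact Order.lt_succ δ) β hβδ)
    · rw [iterDeriv_limit D S hl]
      exact fun x hx => Set.mem_iInter.mp (Set.mem_iInter.mp hx β) hlt

theorem isTree_iterDeriv (S : Set (List ℕ)) (γ : Ordinal.{0}) :
    IsTree (iterDeriv leafDeriv S γ) := by
  induction γ using Ordinal.induction with
  | h γ ih =>
    rcases Ordinal.zero_or_succ_or_isSuccLimit γ with rfl | ⟨δ, rfl⟩ | hl
    · rw [iterDeriv_zero]; exact isTree_clTr S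
    · rw [← Ordinal.add_one_eq_succ, iterDeriv_succ]
      exact (ih δ (by rw [← Ordinal.add_one_eq_succ]; exact Order.lt_succ δ)).leafDeriv
    · rw [iterDeriv_limit _ _ hl]
      intro s t hst ht
      simp only [Set.mem_iInter] at ht ⊢
      intro b hb
      exact ih b hb hst (ht b hb)

theorem isTree_subtreeAt {T : Set (List ℕ)} (hT : IsTree T) (l : List ℕ) :
    IsTree (subtreeAt T l) := by
  intro s t hst ht
  exact hT ((List.prefix_append_right_inj l).mpr hst) ht

theorem wf_subtreeAt {T : Set (List ℕ)} (hT : IsTree T) (hwf : WellFoundedTree T) (k : ℕ) :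
    WellFoundedTree (subtreeAt T [k]) := by
  rintro ⟨σ, hσ⟩
  refine hwf ⟨fun i => match i with | 0 => k | (j+1) => σ j, fun m => ?_⟩
  match m with
  | 0 => exact hT (List.nil_prefix) (hσ 0)
  | (j+1) =>
    have : seqPrefix (fun i => match i with | 0 => k | (j+1) => σ j) (j+1)
        = k :: seqPrefix σ j := by
      rw [seqPrefix, List.ofFn_succ]
      rfl
    rw [this]
    exact hσ j

theorem iterDeriv_subtree {T : Set (List ℕ)} (hT : IsTree T) (k : ℕ) :
    ∀ γ : Ordinal.{0}, ∀ u ∈ iterDeriv leafDeriv (subtreeAt T [k]) γ,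
      (k :: u) ∈ iterDeriv leafDeriv T γ := by
  intro γ
  induction γ using Ordinal.induction with
  | h γ ih =>
    intro u hu
    rcases Ordinal.zero_or_succ_or_isSuccLimit γ with rfl | ⟨δ, rfl⟩ | hl
    · rw [iterDeriv_zero] at hu ⊢
      rw [(isTree_subtreeAt hT [k]).clTr_eq] at hu
      rw [hT.clTr_eq]
      exact hu
    · rw [← Ordinal.add_one_eq_succ, iterDeriv_succ] at hu ⊢
      obtain ⟨hu1, v, hv, huv, hne⟩ := hu
      have hδ : δ < Order.succ δ := Order.lt_succ δ
      rw [← Ordinal.add_one_eq_succ] at hδ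
      refine ⟨ih δ hδ u hu1, k :: v, ih δ hδ v hv, ?_, ?_⟩
      · exact List.cons_prefix_cons.mpr ⟨rfl, huv⟩
      · simpa using hne
    · rw [iterDeriv_limit _ _ hl] at hu ⊢
      rw [Set.mem_iInter] at hu ⊢
      intro b; rw [Set.mem_iInter]
      intro hb
      exact ih b hb u (Set.mem_iInter.mp (hu b) hb)

theorem exists_leaf {T : Set (List ℕ)} (hT : IsTree T) (hwf : WellFoundedTree T)
    (hne : T.Nonempty) : ∃ t ∈ T, ∀ s ∈ T, t <+: s → t = s := by
  by_contra hc
  push_neg at hc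
  have hstep : ∀ t : {l : List ℕ // l ∈ T}, ∃ s : {l : List ℕ // l ∈ T},
      t.1 <+: s.1 ∧ t.1 ≠ s.1 := by
    rintro ⟨t, ht⟩
    obtain ⟨s, hs, hts, hne'⟩ := hc t ht
    exact ⟨⟨s, hs⟩, hts, hne'⟩
  choose F hF1 hF2 using hstep
  obtain ⟨t0, ht0⟩ := hne
  let g : ℕ → {l : List ℕ // l ∈ T} := fun n => Nat.rec ⟨t0, ht0⟩ (fun _ p => F p) n
  have hgs : ∀ n, (g n).1 <+: (g (n+1)).1 ∧ (g n).1 ≠ (g (n+1)).1 := fun n => ⟨hF1 _, hF2 _⟩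
  have hlen : ∀ n, (g n).1.length < (g (n+1)).1.length := by
    intro n
    rcases Nat.lt_or_ge (g n).1.length (g (n+1)).1.length with h | h
    · exact h
    · exact absurd ((hgs n).1.eq_of_length (le_antisymm (hgs n).1.length_le
        (by exact h))) (hgs n).2
  have hmono : ∀ i j, i ≤ j → (g i).1 <+: (g j).1 := by
    intro i j hij
    induction j with
    | zero => rw [Nat.le_zero.mp hij]
    | succ j ihj =>
      rcases Nat.lt_or_ge i (j+1) with h | h
      · exact (ihj (Nat.lt_succ_iff.mp h)).trans (hgs j).1
      · rw [le_antisymm hij h]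
  have hlen' : ∀ n, n ≤ (g n).1.length := by
    intro n
    induction n with
    | zero => exact Nat.zero_le _
    | succ n ihn => exact Nat.lt_of_le_of_lt ihn (hlen n)
  refine hwf ⟨fun i => (g (i+1)).1.getD i 0, fun m => ?_⟩
  have : seqPrefix (fun i => (g (i+1)).1.getD i 0) m = (g m).1.take m := by
    apply List.ext_getElem
    · simp [seqPrefix, Nat.min_eq_left (hlen' m)]
    · intro i h1 h2
      have h1' : i < m := by simpa [seqPrefix] using h1
      simp only [seqPrefix, List.getElem_ofFn, List.getElem_take]
      have hi1 : i < (g (i+1)).1.length := Nat.lt_of_lt_of_le (Nat.lt_succ_self i) (hlen' (i+1))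
      rw [List.getD_eq_getElem _ _ hi1]
      exact ((hmono (i+1) m h1').getElem hi1)
  rw [this]
  exact hT (List.take_prefix m _) (g m).2

end Lemmas4
section Lemmas5

theorem WellFoundedTree.mono {S T : Set (List ℕ)} (h : S ⊆ T) (hwf : WellFoundedTree T) :
    WellFoundedTree S := by
  rintro ⟨σ, hσ⟩
  exact hwf ⟨σ, fun k => h (hσ k)⟩

theorem exists_countable_rank {T : Set (List ℕ)} (hT : IsTree T) (hwf : WellFoundedTree T) :
    ∃ γ : Ordinal.{0}, γ < omega1 ∧ iterDeriv leafDeriv T (γ + 1) = ∅ := by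
  by_contra hc
  push_neg at hc
  have hanti := iterDeriv_anti leafDeriv leafDeriv_subset T
  have hsub : ∀ γ : Ordinal.{0}, iterDeriv leafDeriv T γ ⊆ T := by
    intro γ
    have := hanti γ 0 (zero_le : (0 : Ordinal.{0}) ≤ γ)
    rwa [iterDeriv_zero, hT.clTr_eq] at this
  have key : ∀ γ : {o : Ordinal.{0} // o < omega1}, ∃ t : List ℕ,
      t ∈ iterDeriv leafDeriv T γ.1 ∧ t ∉ iterDeriv leafDeriv T (γ.1 + 1) := by
    rintro ⟨γ, hγ⟩
    have hne1 : (iterDeriv leafDeriv T (γ + 1)).Nonempty := hc γ hγ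
    have hne : (iterDeriv leafDeriv T γ).Nonempty :=
      Set.Nonempty.mono (hanti (γ + 1) γ (le_of_lt (by
        rw [Ordinal.add_one_eq_succ]; exact Order.lt_succ γ))) hne1
    obtain ⟨t, ht, hmax⟩ := exists_leaf (isTree_iterDeriv T γ)
      (WellFoundedTree.mono (hsub γ) hwf) hne
    refine ⟨t, ht, ?_⟩
    rw [iterDeriv_succ]
    rintro ⟨-, v, hv, htv, hne'⟩
    exact hne' (hmax v hv htv)
  choose F hF1 hF2 using key
  have hinj : Function.Injective (fun γ : {o : Ordinal.{0} // o < omega1} =>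
      (ULift.up (F γ) : ULift.{1} (List ℕ))) := by
    intro β γ hbg'
    have hbg : F β = F γ := congrArg ULift.down hbg'
    by_contra hne
    rcases lt_trichotomy β.1 γ.1 with h | h | h
    · have : F γ ∈ iterDeriv leafDeriv T (β.1 + 1) := by
        apply hanti γ.1 (β.1 + 1) (by rw [Ordinal.add_one_eq_succ]; exact Order.succ_le_of_lt h)
        exact hF1 γ
      rw [← hbg] at this
      exact hF2 β this
    · exact hne (Subtype.ext h)
    · have : F β ∈ iterDeriv leafDeriv T (γ.1 + 1) := by
        apply hanti β.1 (γ.1 + 1) (by rw [Ordinal.add_one_eq_succ]; exact Order.succ_le_of_lt h)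
        exact hF1 β
      rw [hbg] at this
      exact hF2 γ this
  have hcard := Cardinal.mk_le_of_injective hinj
  rw [Cardinal.mk_uLift, Cardinal.mk_list_eq_aleph0] at hcard
  have hIio : Cardinal.mk {o : Ordinal.{0} // o < omega1}
      = Cardinal.lift.{1, 0} (Cardinal.aleph 1 : Cardinal.{0}) := by
    have h' := Cardinal.mk_Iio_ordinal omega1
    rw [show omega1.card = (Cardinal.aleph 1 : Cardinal.{0}) from Ordinal.card_omega 1] at h'
    exact h'
  rw [hIio, Cardinal.lift_le] at hcard
  exact absurd hcard (not_le.mpr Cardinal.aleph0_lt_aleph_one)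

theorem leafRank_isEmpty {T : Set (List ℕ)} (hT : IsTree T) (hwf : WellFoundedTree T) :
    iterDeriv leafDeriv T (leafRank T + 1) = ∅ := by
  have hex := exists_countable_rank hT hwf
  rw [leafRank, if_pos hex]
  obtain ⟨γ, _, hγ⟩ := hex
  exact csInf_mem (⟨γ, hγ⟩ :
    Set.Nonempty {γ : Ordinal.{0} | iterDeriv leafDeriv T (γ + 1) = ∅})

theorem lt_leafRank_nonempty {T : Set (List ℕ)} (hT : IsTree T) (hwf : WellFoundedTree T)
    {γ : Ordinal.{0}} (h : γ < leafRank T) : iterDeriv leafDeriv T (γ + 1) ≠ ∅ := by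
  have hex := exists_countable_rank hT hwf
  rw [leafRank, if_pos hex] at h
  intro h0
  exact absurd (csInf_le'
    (show γ ∈ {γ : Ordinal.{0} | iterDeriv leafDeriv T (γ + 1) = ∅} from h0)) (not_le.mpr h)

theorem nil_mem_iterDeriv {T : Set (List ℕ)} (hT : IsTree T) (hwf : WellFoundedTree T)
    (hne : [] ∈ T) : ∀ γ : Ordinal.{0}, γ ≤ leafRank T → [] ∈ iterDeriv leafDeriv T γ := by
  intro γ
  induction γ using Ordinal.induction with
  | h γ ih =>
    intro hγ
    rcases Ordinal.zero_or_succ_or_isSuccLimit γ with rfl | ⟨δ, rfl⟩ | hl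
    · rw [iterDeriv_zero, hT.clTr_eq]; exact hne
    · rw [← Ordinal.add_one_eq_succ] at hγ ⊢
      have hδ : δ < leafRank T := lt_of_lt_of_le (by
        rw [Ordinal.add_one_eq_succ] at hγ ⊢; exact Order.lt_succ δ) hγ
      obtain ⟨t, ht⟩ := Set.nonempty_iff_ne_empty.mpr (lt_leafRank_nonempty hT hwf hδ)
      exact (isTree_iterDeriv T (δ + 1)).nil_mem ht
    · rw [iterDeriv_limit _ _ hl]
      simp only [Set.mem_iInter]
      intro b hb
      exact ih b hb (le_trans hb.le hγ)

theorem leafRank_subtree_lt {T : Set (List ℕ)} (hT : IsTree T) (hwf : WellFoundedTree T)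
    {k : ℕ} (hk : [k] ∈ T) : leafRank (subtreeAt T [k]) < leafRank T := by
  set r := leafRank (subtreeAt T [k]) with hr
  have hknil : [] ∈ subtreeAt T [k] := by
    show [k] ++ [] ∈ T
    simpa using hk
  have h1 : [] ∈ iterDeriv leafDeriv (subtreeAt T [k]) r :=
    nil_mem_iterDeriv (isTree_subtreeAt hT [k]) (wf_subtreeAt hT hwf k) hknil r le_rfl
  have h2 : [k] ∈ iterDeriv leafDeriv T r := iterDeriv_subtree hT k r [] h1
  have h3 : [] ∈ iterDeriv leafDeriv T (r + 1) := by
    rw [iterDeriv_succ]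
    exact ⟨(isTree_iterDeriv T r).nil_mem h2, [k], h2, List.nil_prefix, by simp⟩
  by_contra hcon
  push_neg at hcon
  have hsub := iterDeriv_anti leafDeriv leafDeriv_subset T (r + 1) (leafRank T + 1)
    (add_le_add_left hcon 1)
  rw [leafRank_isEmpty hT hwf] at hsub
  exact Set.notMem_empty _ (hsub h3)

theorem subset_nil_of_leafRank_eq_zero {T : Set (List ℕ)} (hT : IsTree T)
    (hwf : WellFoundedTree T) (h : leafRank T = 0) : T ⊆ {([] : List ℕ)} := by
  have h1 := leafRank_isEmpty hT hwf
  rw [h, iterDeriv_succ, iterDeriv_zero, hT.clTr_eq] at h1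
  intro t ht
  by_contra hne
  have : [] ∈ leafDeriv T :=
    ⟨hT.nil_mem ht, t, ht, List.nil_prefix, fun h' => hne (by simp [← h'])⟩
  rw [h1] at this
  exact Set.notMem_empty _ this

end Lemmas5
section Lemmas6
variable {Y : Type u}

theorem RT_of_subset_nil (T : Set (List ℕ)) (C : List ℕ → Set Y)
    (h : T ⊆ {([] : List ℕ)}) : RT T C = C [] := by
  ext x
  constructor
  · exact fun hx => hx.1
  · intro hx
    refine ⟨hx, fun _ => [], ⟨fun s t _ _ _ => List.prefix_refl [], ?_⟩, ?_⟩
    · intro t ht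
      have ht' := h ht
      simp only [Set.mem_singleton_iff] at ht'
      subst ht'
      rfl
    · intro t ht
      have ht' := h ht
      simp only [Set.mem_singleton_iff] at ht'
      subst ht'
      exact hx

theorem RT_rec (T : Set (List ℕ)) (hT : IsTree T) (C : List ℕ → Set Y) :
    RT T C = C [] ∩ ⋂ k : ℕ, ⋂ _ : [k] ∈ T,
      ⋃ s : List ℕ, ⋃ _ : s.length = k, RT (subtreeAt T [k]) (fun u => C (s ++ u)) := by
  ext x
  constructor
  · rintro ⟨hx, φ, ⟨hmono, hlen⟩, hC⟩
    refine ⟨hx, ?_⟩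
    simp only [Set.mem_iInter, Set.mem_iUnion]
    intro k hk
    have hlenk : (φ [k]).length = k := by
      have := hlen [k] hk
      simpa using this
    refine ⟨φ [k], hlenk, ?_⟩
    have key : ∀ u ∈ subtreeAt T [k], φ ([k] ++ u) = φ [k] ++ (φ ([k] ++ u)).drop k := by
      intro u hu
      have hpre : φ [k] <+: φ ([k] ++ u) := hmono hk hu ⟨u, rfl⟩
      obtain ⟨w, hw⟩ := hpre
      rw [← hw, List.drop_left' hlenk]
    refine ⟨by simpa using hC [k] hk, fun u => (φ ([k] ++ u)).drop k, ⟨?_, ?_⟩, ?_⟩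
    · intro a b ha hb hab
      have h1 : φ ([k] ++ a) <+: φ ([k] ++ b) :=
        hmono ha hb ((List.prefix_append_right_inj [k]).mpr hab)
      rw [key a ha, key b hb] at h1
      exact (List.prefix_append_right_inj _).mp h1
    · intro u hu
      have h1 := hlen ([k] ++ u) hu
      rw [List.length_drop, h1, List.sum_append]
      simp
    · intro u hu
      show x ∈ C (φ [k] ++ (φ ([k] ++ u)).drop k)
      rw [← key u hu]
      exact hC ([k] ++ u) hu
  · rintro ⟨hx, hmem⟩
    simp only [Set.mem_iInter, Set.mem_iUnion] at hmem
    have hchoice : ∀ k : ℕ, ∃ (s : List ℕ) (ψ : List ℕ → List ℕ), [k] ∈ T →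
        s.length = k ∧ Admissible (subtreeAt T [k]) ψ ∧
          (∀ u ∈ subtreeAt T [k], x ∈ C (s ++ ψ u)) := by
      intro k
      by_cases hk : [k] ∈ T
      · obtain ⟨s, hsl, hx0, ψ, hadm, hCψ⟩ := hmem k hk
        exact ⟨s, ψ, fun _ => ⟨hsl, hadm, hCψ⟩⟩
      · exact ⟨[], id, fun h => absurd h hk⟩
    choose S Ψ hSΨ using hchoice
    refine ⟨hx, fun t => match t with | [] => [] | (k :: u) => S k ++ Ψ k u, ⟨?_, ?_⟩, ?_⟩
    · rintro a b ha hb hab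
      match a, b with
      | [], _ => exact List.nil_prefix
      | k :: u, [] => exact absurd (List.prefix_nil.mp hab) (by simp)
      | k :: u, k' :: v =>
        obtain ⟨rfl, huv⟩ := List.cons_prefix_cons.mp hab
        have hk : [k] ∈ T := hT (by simp : [k] <+: k :: u) ha
        exact (List.prefix_append_right_inj _).mpr
          ((hSΨ k hk).2.1.1 (show (k :: u : List ℕ) ∈ T from ha)
            (show (k :: v : List ℕ) ∈ T from hb) huv)
    · rintro t ht
      match t with
      | [] => rfl
      | k :: u =>
        have hk : [k] ∈ T := hT (by simp : [k] <+: k :: u) ht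
        have h1 := (hSΨ k hk).2.1.2 u (show (k :: u : List ℕ) ∈ T from ht)
        simp only [List.length_append, (hSΨ k hk).1, List.sum_cons, h1]
    · rintro t ht
      match t with
      | [] => exact hx
      | k :: u =>
        have hk : [k] ∈ T := hT (by simp : [k] <+: k :: u) ht
        exact (hSΨ k hk).2.2 u (show (k :: u : List ℕ) ∈ T from ht)

end Lemmas6
section Main
variable {Y : Type u} [TopologicalSpace Y]

theorem leafRank_eq_zero_of_empty (h : (∅ : Set (List ℕ)) = (∅ : Set (List ℕ))) :
    leafRank (∅ : Set (List ℕ)) = 0 := by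
  have hT : IsTree (∅ : Set (List ℕ)) := fun s t _ ht => ht
  have hwf : WellFoundedTree (∅ : Set (List ℕ)) := by
    rintro ⟨σ, hσ⟩; exact Set.notMem_empty _ (hσ 0)
  have h10 : iterDeriv leafDeriv (∅ : Set (List ℕ)) (0 + 1) = ∅ := by
    rw [iterDeriv_succ, iterDeriv_zero]
    have hcl : clTr (∅ : Set (List ℕ)) = ∅ := by
      ext u; simp [clTr]
    rw [hcl]
    ext u; simp [leafDeriv]
  have hle : leafRank (∅ : Set (List ℕ)) ≤ 0 := by
    rw [leafRank, if_pos (exists_countable_rank hT hwf)]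
    exact csInf_le' (show (0 : Ordinal.{0}) ∈
      {γ : Ordinal.{0} | iterDeriv leafDeriv ∅ (γ + 1) = ∅} from h10)
  exact nonpos_iff_eq_zero.mp hle

theorem RT_mem_FBorel :
    ∀ r : Ordinal.{0}, ∀ (T : Set (List ℕ)) (C : List ℕ → Set Y),
      (∀ s, IsClosed (C s)) → IsTree T → WellFoundedTree T →
      ∀ (lam : Ordinal.{0}) (n : ℕ), (Order.IsSuccLimit lam ∨ lam = 0) →
      leafRank T = lam + (n : Ordinal.{0}) → r = lam + (n : Ordinal.{0}) →
      RT T C ∈ FBorel Y (lam + ((2 * n : ℕ) : Ordinal.{0})) := by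
  intro r
  induction r using Ordinal.induction with
  | h r ih =>
    intro T C hcl hT hwf lam n hlam hrank hr
    rcases eq_or_ne r 0 with rfl | hr0
    · obtain ⟨hlam0, hn0⟩ := Ordinal.add_eq_zero_iff.mp hr.symm
      have hn0' : n = 0 := by exact_mod_cast hn0
      subst hlam0 hn0'
      have hsub : T ⊆ {([] : List ℕ)} :=
        subset_nil_of_leafRank_eq_zero hT hwf (by rw [hrank]; simp)
      rw [RT_of_subset_nil T C hsub]
      simpa using isClosed_mem_FBorel (hcl []) 0
    · have hTne : [] ∈ T := by
        by_contra hnil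
        have hTe : T = ∅ := by
          ext t; simp only [Set.mem_empty_iff_false, iff_false]
          exact fun ht => hnil (hT.nil_mem ht)
        rw [hTe, leafRank_eq_zero_of_empty rfl] at hrank
        exact hr0 (hr.trans hrank.symm)
      rw [RT_rec T hT C]
      set A : ℕ → Set Y := fun k => ⋂ _ : [k] ∈ T,
        ⋃ s : List ℕ, ⋃ _ : s.length = k,
          RT (subtreeAt T [k]) (fun u => C (s ++ u)) with hA
      have hsplit : C [] ∩ ⋂ k : ℕ, A k = ⋂ o : Option ℕ, Option.elim o (C []) A := by
        ext x
        simp only [Set.mem_inter_iff, Set.mem_iInter, Option.forall, Option.elim]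
      rw [hsplit]
      -- each union with [k] ∈ T is in a suitable class
      have hsubmem : ∀ k : ℕ, [k] ∈ T →
          ∃ b : Ordinal.{0}, b < lam + ((2 * n : ℕ) : Ordinal.{0}) ∧ b ≤ lam + ((2 * n : ℕ) : Ordinal.{0}) ∧
            (⋃ s : List ℕ, ⋃ _ : s.length = k,
              RT (subtreeAt T [k]) (fun u => C (s ++ u))) ∈ FBorel Y b := by
        intro k hk
        have hrk : leafRank (subtreeAt T [k]) < r := by
          rw [hr, ← hrank]
          exact leafRank_subtree_lt hT hwf hk
        obtain ⟨lk, nk, hlk, hdec⟩ := exists_decomp (leafRank (subtreeAt T [k]))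
        have hRT : ∀ s : List ℕ, RT (subtreeAt T [k]) (fun u => C (s ++ u)) ∈
            FBorel Y (lk + ((2 * nk : ℕ) : Ordinal.{0})) := by
          intro s
          exact ih (leafRank (subtreeAt T [k])) hrk (subtreeAt T [k]) _
            (fun u => hcl (s ++ u)) (isTree_subtreeAt hT [k]) (wf_subtreeAt hT hwf k)
            lk nk hlk hdec hdec
        have hlt' : lk + (nk : Ordinal.{0}) < lam + (n : Ordinal.{0}) := by
          rw [← hdec, ← hr]; exact hrk
        -- reindex the union over the subtype
        have hre : (⋃ s : List ℕ, ⋃ _ : s.length = k,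
            RT (subtreeAt T [k]) (fun u => C (s ++ u)))
            = ⋃ p : {s : List ℕ // s.length = k},
              RT (subtreeAt T [k]) (fun u => C (p.1 ++ u)) := by
          ext x; simp only [Set.mem_iUnion, Subtype.exists]
        rw [hre]
        match n with
        | 0 =>
          have hlaml : Order.IsSuccLimit lam := by
            rcases hlam with h | rfl
            · exact h
            · exact absurd (by simpa using hr) hr0
          have hlk_lt : lk < lam :=
            lt_of_le_of_lt (le_self_add : lk ≤ lk + (nk : Ordinal.{0})) (by simpa using hlt')
          refine ⟨lk + ((2 * nk + 1 : ℕ) : Ordinal.{0}), ?_, ?_, ?_⟩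
          · simpa using add_nat_lt_limit hlk hlaml hlk_lt (2 * nk + 1)
          · simpa using (add_nat_lt_limit hlk hlaml hlk_lt (2 * nk + 1)).le
          · apply mem_FBorel_iUnion (oddOrd_add_nat hlk nk)
            intro p
            refine ⟨lk + ((2 * nk : ℕ) : Ordinal.{0}), ?_, hRT p.1⟩
            rw [add_lt_add_iff_left]
            exact_mod_cast Nat.lt_succ_self (2 * nk)
        | (m + 1) =>
          refine ⟨lam + ((2 * m + 1 : ℕ) : Ordinal.{0}), ?_, ?_, ?_⟩
          · rw [add_lt_add_iff_left]
            exact_mod_cast (by omega : 2 * m + 1 < 2 * (m + 1))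
          · rw [add_le_add_iff_left]
            exact_mod_cast (by omega : 2 * m + 1 ≤ 2 * (m + 1))
          · apply mem_FBorel_iUnion (oddOrd_add_nat hlam m)
            intro p
            refine ⟨lam + ((2 * m : ℕ) : Ordinal.{0}), ?_, ?_⟩
            · rw [add_lt_add_iff_left]
              exact_mod_cast Nat.lt_succ_self (2 * m)
            · refine FBorel_mono ?_ (hRT p.1)
              have : 2 * (m + 1) - 1 = 2 * m + 1 := by omega
              have hcle := comp_le hlk hlam (by omega : 1 ≤ m + 1) hlt'
              simpa [this, (by omega : 2 * ((m+1) - 1) = 2 * m)] using hcle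
      apply mem_FBorel_iInter (evenOrd_add_nat hlam n)
      rintro (_ | k)
      · exact ⟨0, zero_le, by rw [FBorel_zero]; exact hcl []⟩
      · show ∃ b ≤ lam + ((2 * n : ℕ) : Ordinal.{0}), A k ∈ FBorel Y b
        by_cases hk : [k] ∈ T
        · obtain ⟨b, _, hble, hbmem⟩ := hsubmem k hk
          refine ⟨b, hble, ?_⟩
          have : A k = ⋃ s : List ℕ, ⋃ _ : s.length = k,
              RT (subtreeAt T [k]) (fun u => C (s ++ u)) := by
            rw [hA]; ext x; simp [hk]
          rw [this]
          exact hbmem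
        · have : A k = Set.univ := by
            rw [hA]; ext x; simp [hk]
          rw [this]
          exact ⟨0, zero_le, by rw [FBorel_zero]; exact isClosed_univ⟩

end Main
/-- Complexity of `R_T`-sets: for a closed Suslin scheme `C` in `Y` and
a well-founded tree `T` with `r_l(T) = λ + n` (`λ` limit or zero, `n` finite), `R_T(C)`
is in `F_{λ+2n}(Y)`; and if the root of `T` has only finitely many immediate successors,
`R_T(C)` is in `F_{λ+2n-1}(Y)`. -/
theorem RT_complexity (Y : Type u) [TopologicalSpace Y] (C : List ℕ → Set Y)
    (hmono : IsSuslinScheme C) (hcl : ∀ s, IsClosed (C s))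
    (T : Set (List ℕ)) (hT : IsTree T) (hwf : WellFoundedTree T)
    (lam : Ordinal.{0}) (n : ℕ) (hlam : Order.IsSuccLimit lam ∨ lam = 0)
    (hrank : leafRank T = lam + (n : Ordinal.{0})) :
    RT T C ∈ FBorel Y (lam + ((2 * n : ℕ) : Ordinal.{0})) ∧
    ({ k : ℕ | [k] ∈ T }.Finite →
      RT T C ∈ FBorel Y (lam + ((2 * n - 1 : ℕ) : Ordinal.{0}))) := by
  have hpartI := RT_mem_FBorel (lam + (n : Ordinal.{0})) T C hcl hT hwf lam n hlam hrank rfl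
  refine ⟨hpartI, fun hfin => ?_⟩
  match n with
  | 0 => simpa using hpartI
  | (m + 1) =>
    have h2m1 : (2 * (m + 1) - 1 : ℕ) = 2 * m + 1 := by omega
    rw [h2m1]
    haveI := hfin.to_subtype
    set K := { k : ℕ | [k] ∈ T } with hK
    set B : ℕ → List ℕ → Set Y := fun k s =>
      if s.length = k then RT (subtreeAt T [k]) (fun u => C (s ++ u)) else ∅ with hB
    have hclaim : RT T C = ⋃ g : K → List ℕ,
        (C [] ∩ ⋂ k : K, B k.1 (g k)) := by
      rw [RT_rec T hT C]
      ext x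
      constructor
      · rintro ⟨hx, hmem⟩
        simp only [Set.mem_iInter] at hmem
        have hch : ∀ k : K, ∃ s : List ℕ, x ∈ B k.1 s := by
          rintro ⟨k, hk⟩
          have := hmem k hk
          simp only [Set.mem_iUnion] at this
          obtain ⟨s, hs, hxs⟩ := this
          exact ⟨s, by rw [hB]; simp only [if_pos hs]; exact hxs⟩
        choose g hg using hch
        refine Set.mem_iUnion.mpr ⟨g, hx, Set.mem_iInter.mpr hg⟩
      · intro hx
        obtain ⟨g, hx1, hx2⟩ := Set.mem_iUnion.mp hx
        refine ⟨hx1, ?_⟩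
        simp only [Set.mem_iInter]
        intro k hk
        have := Set.mem_iInter.mp hx2 ⟨k, hk⟩
        rw [hB] at this
        simp only [Set.mem_iUnion]
        by_cases hlen : (g ⟨k, hk⟩).length = k
        · exact ⟨g ⟨k, hk⟩, hlen, by simpa only [if_pos hlen] using this⟩
        · exact absurd (by simpa only [if_neg hlen] using this : x ∈ (∅ : Set Y))
            (Set.notMem_empty x)
    rw [hclaim]
    apply mem_FBorel_iUnion (oddOrd_add_nat hlam m)
    intro g
    refine ⟨lam + ((2 * m : ℕ) : Ordinal.{0}), ?_, ?_⟩
    · rw [add_lt_add_iff_left]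
      exact_mod_cast Nat.lt_succ_self (2 * m)
    · have hsplit : C [] ∩ ⋂ k : K, B k.1 (g k)
          = ⋂ o : Option K, Option.elim o (C []) (fun k => B k.1 (g k)) := by
        ext x
        simp only [Set.mem_inter_iff, Set.mem_iInter, Option.forall, Option.elim]
      rw [hsplit]
      apply mem_FBorel_iInter (evenOrd_add_nat hlam m)
      rintro (_ | k)
      · exact ⟨0, zero_le, by rw [FBorel_zero]; exact hcl []⟩
      · show ∃ b ≤ lam + ((2 * m : ℕ) : Ordinal.{0}), B k.1 (g k) ∈ FBorel Y b
        rw [hB]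
        beta_reduce
        by_cases hlen : (g k).length = k.1
        · rw [if_pos hlen]
          have hk : [k.1] ∈ T := k.2
          have hrk : leafRank (subtreeAt T [k.1]) < lam + ((m + 1 : ℕ) : Ordinal.{0}) := by
            rw [← hrank]
            exact leafRank_subtree_lt hT hwf hk
          obtain ⟨lk, nk, hlk, hdec⟩ := exists_decomp (leafRank (subtreeAt T [k.1]))
          have hRT : RT (subtreeAt T [k.1]) (fun u => C (g k ++ u)) ∈
              FBorel Y (lk + ((2 * nk : ℕ) : Ordinal.{0})) :=
            RT_mem_FBorel _ (subtreeAt T [k.1]) _ (fun u => hcl (g k ++ u))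
              (isTree_subtreeAt hT [k.1]) (wf_subtreeAt hT hwf k.1) lk nk hlk hdec rfl
          refine ⟨lk + ((2 * nk : ℕ) : Ordinal.{0}), ?_, hRT⟩
          have hcle := comp_le hlk hlam (by omega : 1 ≤ m + 1) (by rw [← hdec]; exact hrk)
          simpa [(by omega : 2 * ((m + 1) - 1) = 2 * m)] using hcle
        · rw [if_neg hlen]
          exact ⟨0, zero_le, by rw [FBorel_zero]; exact isClosed_empty⟩

end FBorelPaper
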